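/- For the graphite Hamiltonian, det(H_0(x) − λ) = λ⁴ − ((α(x)+1)/8) λ² + (α(x)−1)²/256, where α(x) = 3 + 2(cos x_1 + cos x_2 + cos(x_1 − x_2)); consequently, the eigenvalues of H_0(x) are ±(√α(x) ± 1)/4. -/

import Mathlib

lemma graphite_key (x₁ x₂ : ℝ) (c : ℂ)
    (hc : c = 1 + Complex.exp (-Complex.I * (x₁ : ℂ)) + Complex.exp (-Complex.I * (x₂ : ℂ)))
    (α : ℝ) (hα : α = 3 + 2 * (Real.cos x₁ + Real.cos x₂ + Real.cos (x₁ - x₂))) :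
    (starRingEnd ℂ) c * c = (α : ℂ) := by
  subst hc hα
  have key : ∀ t : ℝ, (starRingEnd ℂ) (Complex.exp (-Complex.I * (t:ℂ))) = Complex.exp (Complex.I * t) := by
    intro t
    rw [← Complex.exp_conj]; ring_nf; simp [Complex.conj_ofReal]
  push_cast
  simp only [map_add, map_one, key]
  rw [Complex.cos, Complex.cos, Complex.cos]
  ring_nf
  simp only [← Complex.exp_add]
  ring_nf
  rw [Complex.exp_zero]; ring

set_option maxHeartbeats 1000000 in
theorem statement16 (x₁ x₂ : ℝ) (c : ℂ)
    (hc : c = 1 + Complex.exp (-Complex.I * (x₁ : ℂ)) + Complex.exp (-Complex.I * (x₂ : ℂ)))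
    (α : ℝ) (hα : α = 3 + 2 * (Real.cos x₁ + Real.cos x₂ + Real.cos (x₁ - x₂)))
    (H₀ : Matrix (Fin 4) (Fin 4) ℂ)
    (hH₀ : H₀ = (-(1 / 4) : ℂ) •
      !![0, (starRingEnd ℂ) c, 1, 0;
         c, 0, 0, 1;
         1, 0, 0, (starRingEnd ℂ) c;
         0, 1, c, 0]) :
    (∀ lam : ℂ, (H₀ - lam • (1 : Matrix (Fin 4) (Fin 4) ℂ)).det
        = lam ^ 4 - ((α : ℂ) + 1) / 8 * lam ^ 2 + ((α : ℂ) - 1) ^ 2 / 256)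
    ∧ (∀ μ : ℂ, (H₀ - μ • (1 : Matrix (Fin 4) (Fin 4) ℂ)).det = 0 ↔
        (μ = ((Real.sqrt α : ℂ) + 1) / 4 ∨ μ = ((Real.sqrt α : ℂ) - 1) / 4
          ∨ μ = -(((Real.sqrt α : ℂ) + 1) / 4) ∨ μ = -(((Real.sqrt α : ℂ) - 1) / 4))) := by
  have key := graphite_key x₁ x₂ c hc α hα
  have hdet : ∀ lam : ℂ, (H₀ - lam • (1 : Matrix (Fin 4) (Fin 4) ℂ)).det
      = lam ^ 4 - ((α : ℂ) + 1) / 8 * lam ^ 2 + ((α : ℂ) - 1) ^ 2 / 256 := by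
    intro lam
    subst hH₀
    rw [show ((-(1 / 4) : ℂ) •
      !![0, (starRingEnd ℂ) c, 1, 0;
         c, 0, 0, 1;
         1, 0, 0, (starRingEnd ℂ) c;
         0, 1, c, 0] - lam • (1 : Matrix (Fin 4) (Fin 4) ℂ)) =
      !![-lam, -(1/4) * (starRingEnd ℂ) c, -(1/4), 0;
         -(1/4) * c, -lam, 0, -(1/4);
         -(1/4), 0, -lam, -(1/4) * (starRingEnd ℂ) c;
         0, -(1/4), -(1/4) * c, -lam] from by
        ext i j
        fin_cases i <;> fin_cases j <;>
          simp [Matrix.one_apply, Matrix.smul_apply]]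
    simp [Matrix.det_succ_row_zero, Fin.sum_univ_succ]
    simp [Fin.succAbove, Fin.lt_def]
    linear_combination (lam^2 / 8 - ((starRingEnd ℂ) c * c + ↑α - 2) / 256 - lam^2 / 4 - 1/64 + ((starRingEnd ℂ) c * c + ↑α) / 128) * key
  refine ⟨hdet, fun μ => ?_⟩
  have hα0 : 0 ≤ α := by
    have : (α : ℂ) = (Complex.normSq c : ℝ) := by
      rw [← key]; simp [Complex.normSq_eq_conj_mul_self]
    have := Complex.ofReal_injective this
    rw [this]; exact Complex.normSq_nonneg c
  have hs : ((Real.sqrt α : ℂ)) ^ 2 = (α : ℂ) := by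
    rw [← Complex.ofReal_pow, Real.sq_sqrt hα0]
  rw [hdet μ]
  have factor : μ ^ 4 - ((α : ℂ) + 1) / 8 * μ ^ 2 + ((α : ℂ) - 1) ^ 2 / 256
      = (μ - ((Real.sqrt α : ℂ) + 1) / 4) * (μ - ((Real.sqrt α : ℂ) - 1) / 4)
        * (μ + ((Real.sqrt α : ℂ) + 1) / 4) * (μ + ((Real.sqrt α : ℂ) - 1) / 4) := by
    linear_combination (μ^2 / 8 - (((Real.sqrt α : ℂ))^2 + (α:ℂ) - 2) / 256) * hs
  rw [factor]
  simp only [mul_eq_zero, sub_eq_zero, add_eq_zero_iff_eq_neg]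
  tauto
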